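/- arXiv:2410.03666 — 8 statements merged into one kernel-verified Lean document; each statement's English description precedes it below -/
import Mathlib

section
/- Let w > 0 and let α, β, γ ∈ (0, π/2) with β ≤ α. If cos(α+β)/sin(β) = cos(2γ)/sin(γ), then β ≤ γ ≤ α, with β = γ if and only if α = β = γ. -/
open Real

lemma f_strict_anti {s t : ℝ} (hs : s ∈ Set.Ioo 0 (Real.pi / 2))
    (ht : t ∈ Set.Ioo 0 (Real.pi / 2)) (hst : s < t) :
    Real.cos (2 * t) / Real.sin t < Real.cos (2 * s) / Real.sin s := by
  have hss : 0 < Real.sin s := Real.sin_pos_of_pos_of_lt_pi hs.1 (by linarith [Real.pi_pos, hs.2])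
  have hst' : 0 < Real.sin t := Real.sin_pos_of_pos_of_lt_pi ht.1 (by linarith [Real.pi_pos, ht.2])
  have hmono : Real.sin s < Real.sin t :=
    Real.strictMonoOn_sin ⟨by linarith [hs.1, Real.pi_pos], le_of_lt (by linarith [hs.2])⟩
      ⟨by linarith [ht.1, Real.pi_pos], le_of_lt (by linarith [ht.2])⟩ hst
  have hcs : Real.cos (2 * s) = 1 - 2 * Real.sin s ^ 2 := by
    rw [Real.cos_two_mul']
    nlinarith [Real.sin_sq_add_cos_sq s]
  have hct : Real.cos (2 * t) = 1 - 2 * Real.sin t ^ 2 := by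
    rw [Real.cos_two_mul']
    nlinarith [Real.sin_sq_add_cos_sq t]
  rw [div_lt_div_iff₀ hst' hss, hcs, hct]
  nlinarith [mul_pos hss hst']

lemma f_le_imp {s t : ℝ} (hs : s ∈ Set.Ioo 0 (Real.pi / 2))
    (ht : t ∈ Set.Ioo 0 (Real.pi / 2))
    (h : Real.cos (2 * t) / Real.sin t ≤ Real.cos (2 * s) / Real.sin s) : s ≤ t := by
  by_contra hc
  push_neg at hc
  exact absurd h (not_le.mpr (f_strict_anti ht hs hc))

theorem stmt_3 (w α β γ : ℝ) (hw : 0 < w)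
    (hα : α ∈ Set.Ioo 0 (Real.pi / 2)) (hβ : β ∈ Set.Ioo 0 (Real.pi / 2))
    (hγ : γ ∈ Set.Ioo 0 (Real.pi / 2)) (hβα : β ≤ α)
    (h : Real.cos (α + β) / Real.sin β = Real.cos (2 * γ) / Real.sin γ) :
    β ≤ γ ∧ γ ≤ α ∧ (β = γ ↔ α = β ∧ β = γ) := by
  have hsβ : 0 < Real.sin β := Real.sin_pos_of_pos_of_lt_pi hβ.1 (by linarith [Real.pi_pos, hβ.2])
  have hsα : 0 < Real.sin α := Real.sin_pos_of_pos_of_lt_pi hα.1 (by linarith [Real.pi_pos, hα.2])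
  have hcα : 0 < Real.cos α := Real.cos_pos_of_mem_Ioo ⟨by linarith [hα.1, Real.pi_pos], hα.2⟩
  -- Step A: cos(α+β) ≤ cos(2β)
  have hA : Real.cos (α + β) ≤ Real.cos (2 * β) :=
    Real.cos_le_cos_of_nonneg_of_le_pi (by linarith [hβ.1]) (by linarith [hα.2, hβ.2])
      (by linarith)
  have hfβ : Real.cos (2 * γ) / Real.sin γ ≤ Real.cos (2 * β) / Real.sin β := by
    rw [← h]
    exact (div_le_div_iff_of_pos_right hsβ).mpr hA
  have hβγ : β ≤ γ := f_le_imp hβ hγ hfβ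
  -- Step B: cos(2α) * sin β ≤ cos(α+β) * sin α
  have hsab : 0 ≤ Real.sin (α - β) :=
    Real.sin_nonneg_of_nonneg_of_le_pi (by linarith) (by linarith [hα.2, Real.pi_pos, hβ.1])
  have hB : Real.cos (2 * α) * Real.sin β ≤ Real.cos (α + β) * Real.sin α := by
    have e1 : Real.cos (α + β) * Real.sin α - Real.cos (2 * α) * Real.sin β
        = Real.cos α * Real.sin (α - β) := by
      rw [Real.cos_add, Real.sin_sub, Real.cos_two_mul']
      ring
    nlinarith [mul_nonneg hcα.le hsab]
  have hfα : Real.cos (2 * α) / Real.sin α ≤ Real.cos (2 * γ) / Real.sin γ := by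
    rw [← h, div_le_div_iff₀ hsα hsβ]
    exact hB
  have hγα : γ ≤ α := f_le_imp hγ hα hfα
  refine ⟨hβγ, hγα, ?_, fun ⟨_, h2⟩ => h2⟩
  intro hbg
  refine ⟨?_, hbg⟩
  subst hbg
  have hc : Real.cos (α + β) = Real.cos (2 * β) := by
    field_simp at h
    rw [mul_comm β 2] at h
    exact h
  have := Real.injOn_cos ⟨by linarith [hα.1, hβ.1], by linarith [hα.2, hβ.2]⟩
    ⟨by linarith [hβ.1], by linarith [hβ.2]⟩ hc
  linarith
end

section
/- For every w > 0, we have w < 2·arcosh((cosh(w) + √(cosh²w + 8))/4) < 2w. -/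
noncomputable def arcosh (x : ℝ) : ℝ := Real.log (x + Real.sqrt (x ^ 2 - 1))

lemma arcosh_cosh (t : ℝ) (ht : 0 ≤ t) : arcosh (Real.cosh t) = t := by
  unfold arcosh
  have h1 : Real.cosh t ^ 2 - 1 = Real.sinh t ^ 2 := by
    nlinarith [Real.cosh_sq_sub_sinh_sq t]
  rw [h1, Real.sqrt_sq (Real.sinh_nonneg_iff.2 ht), Real.cosh_add_sinh, Real.log_exp]

lemma arcosh_lt_arcosh {a b : ℝ} (ha : 1 ≤ a) (hab : a < b) : arcosh a < arcosh b := by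
  unfold arcosh
  apply Real.log_lt_log
  · nlinarith [Real.sqrt_nonneg (a ^ 2 - 1)]
  · have h : Real.sqrt (a ^ 2 - 1) ≤ Real.sqrt (b ^ 2 - 1) :=
      Real.sqrt_le_sqrt (by nlinarith)
    linarith

theorem stmt_5 (w : ℝ) (hw : 0 < w) :
    w < 2 * arcosh ((Real.cosh w + Real.sqrt (Real.cosh w ^ 2 + 8)) / 4) ∧
    2 * arcosh ((Real.cosh w + Real.sqrt (Real.cosh w ^ 2 + 8)) / 4) < 2 * w := by
  set c := Real.cosh w with hcdef
  have hc : 1 < c := by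
    have := Real.one_lt_cosh.2 (ne_of_gt hw)
    simpa [hcdef] using this
  set y := (c + Real.sqrt (c ^ 2 + 8)) / 4 with hydef
  have hs3 : (3 : ℝ) ≤ Real.sqrt (c ^ 2 + 8) := by
    rw [show (3:ℝ) = Real.sqrt 9 by
      rw [show (9:ℝ) = 3 ^ 2 by norm_num, Real.sqrt_sq]; norm_num]
    exact Real.sqrt_le_sqrt (by nlinarith)
  have hy1 : 1 ≤ y := by rw [hydef]; linarith
  -- upper bound: y < c
  have hyc : y < c := by
    have h1 : Real.sqrt (c ^ 2 + 8) < 3 * c := by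
      rw [show (3:ℝ) * c = Real.sqrt ((3 * c) ^ 2) by
        rw [Real.sqrt_sq (by linarith)]]
      exact Real.sqrt_lt_sqrt (by nlinarith) (by nlinarith)
    rw [hydef]; linarith
  -- lower bound: cosh (w/2) < y
  set d := Real.cosh (w / 2) with hddef
  have hd : 1 < d := by
    have := Real.one_lt_cosh.2 (ne_of_gt (by linarith : (0:ℝ) < w / 2))
    simpa [hddef] using this
  have hcd : c = 2 * d ^ 2 - 1 := by
    have h := Real.cosh_two_mul (w / 2)
    rw [show (2:ℝ) * (w / 2) = w by ring] at h
    have h2 := Real.cosh_sq_sub_sinh_sq (w / 2)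
    rw [hcdef, hddef]
    nlinarith [h, h2]
  have hdy : d < y := by
    have hkey : 4 * d - c < Real.sqrt (c ^ 2 + 8) := by
      rcases le_or_gt (4 * d - c) 0 with h | h
      · calc 4 * d - c ≤ 0 := h
          _ < 3 := by norm_num
          _ ≤ _ := hs3
      · have : (4 * d - c) ^ 2 < c ^ 2 + 8 := by nlinarith
        calc 4 * d - c = Real.sqrt ((4 * d - c) ^ 2) := by
              rw [Real.sqrt_sq (le_of_lt h)]
          _ < Real.sqrt (c ^ 2 + 8) := Real.sqrt_lt_sqrt (by positivity) this
    rw [hydef]; linarith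
  constructor
  · have h := arcosh_lt_arcosh (le_of_lt hd) hdy
    rw [hddef, arcosh_cosh (w / 2) (by linarith)] at h
    linarith
  · have h := arcosh_lt_arcosh hy1 hyc
    rw [hcdef, arcosh_cosh w (le_of_lt hw)] at h
    linarith
end

section
/- The limit as w → +∞ of (2·arcosh((cosh(w) + √(cosh²w + 8))/4))/w equals 2. -/
open Filter

lemma aux_lim (k : ℝ) : Tendsto (fun w : ℝ => 2 * (w + k) / w) atTop (nhds 2) := by
  have h : Tendsto (fun w : ℝ => 2 + 2 * k * w⁻¹) atTop (nhds 2) := by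
    have := (tendsto_const_nhds (x := (2 * k : ℝ)) (f := atTop)).mul tendsto_inv_atTop_zero
    simpa using (tendsto_const_nhds (x := (2 : ℝ))).add this
  refine h.congr' ?_
  filter_upwards [eventually_gt_atTop (0 : ℝ)] with w hw
  field_simp

theorem stmt_6 :
    Filter.Tendsto
      (fun w : ℝ => 2 * arcosh ((Real.cosh w + Real.sqrt (Real.cosh w ^ 2 + 8)) / 4) / w)
      Filter.atTop (nhds 2) := by
  have hlo := aux_lim (-Real.log 4)
  have hhi := aux_lim (Real.log 2)
  refine tendsto_of_tendsto_of_tendsto_of_le_of_le' hlo hhi ?_ ?_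
  all_goals
    filter_upwards [eventually_ge_atTop (1 : ℝ)] with w hw
  all_goals {
    have hw0 : (0 : ℝ) < w := by linarith
    set c := Real.cosh w with hc
    have hc1 : 1 ≤ c := Real.one_le_cosh w
    have hcle : c ≤ Real.exp w := by
      rw [hc, Real.cosh_eq]
      have h1 : Real.exp (-w) ≤ Real.exp w := Real.exp_le_exp.mpr (by linarith)
      linarith
    have hcge : Real.exp w / 2 ≤ c := by
      rw [hc, Real.cosh_eq]
      have := Real.exp_pos (-w)
      linarith
    set a := (c + Real.sqrt (c ^ 2 + 8)) / 4 with ha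
    have hsq_lb : c ≤ Real.sqrt (c ^ 2 + 8) := by
      have : c = Real.sqrt (c ^ 2) := by
        rw [Real.sqrt_sq (by linarith)]
      rw [this]
      exact Real.sqrt_le_sqrt (by nlinarith)
    have hsq_ub : Real.sqrt (c ^ 2 + 8) ≤ c + 2 := by
      have : Real.sqrt (c ^ 2 + 8) ≤ Real.sqrt ((c + 2) ^ 2) :=
        Real.sqrt_le_sqrt (by nlinarith)
      rwa [Real.sqrt_sq (by linarith)] at this
    have hsq3 : (3 : ℝ) ≤ Real.sqrt (c ^ 2 + 8) := by
      have : Real.sqrt 9 ≤ Real.sqrt (c ^ 2 + 8) := Real.sqrt_le_sqrt (by nlinarith)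
      rwa [show (9 : ℝ) = 3 ^ 2 by norm_num, Real.sqrt_sq (by norm_num)] at this
    have ha1 : 1 ≤ a := by rw [ha]; linarith
    have halo : c / 2 ≤ a := by rw [ha]; linarith
    have hahi : a ≤ (c + 1) / 2 := by rw [ha]; linarith
    have hs_nonneg : 0 ≤ Real.sqrt (a ^ 2 - 1) := Real.sqrt_nonneg _
    have hs_le : Real.sqrt (a ^ 2 - 1) ≤ a := by
      have : Real.sqrt (a ^ 2 - 1) ≤ Real.sqrt (a ^ 2) := Real.sqrt_le_sqrt (by nlinarith)
      rwa [Real.sqrt_sq (by linarith)] at this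
    set x := a + Real.sqrt (a ^ 2 - 1) with hx
    have hxlo : Real.exp w / 4 ≤ x := by rw [hx]; linarith
    have hxhi : x ≤ 2 * Real.exp w := by
      have : (1 : ℝ) ≤ Real.exp w := Real.one_le_exp (by linarith)
      rw [hx]; linarith
    have hxpos : 0 < x := lt_of_lt_of_le (by positivity) hxlo
    have hloglo : w - Real.log 4 ≤ Real.log x := by
      have h1 : Real.log (Real.exp w / 4) ≤ Real.log x :=
        Real.log_le_log (by positivity) hxlo
      rwa [Real.log_div (Real.exp_ne_zero w) (by norm_num), Real.log_exp] at h1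
    have hloghi : Real.log x ≤ w + Real.log 2 := by
      have h1 : Real.log x ≤ Real.log (2 * Real.exp w) := Real.log_le_log hxpos hxhi
      rwa [Real.log_mul (by norm_num) (Real.exp_ne_zero w), Real.log_exp, add_comm] at h1
    show _
    unfold arcosh
    rw [← hx]
    gcongr 2 * ?_ / w <;> linarith
  }
end

section
/- Let w > 0 and let γ ∈ (0, π/2) satisfy sin(γ) = (−cosh(w) + √(cosh²w + 8))/4. Then arcosh(cosh(w)·√(1 + sinh²(w)/(4cos²γ))) = 2·arcosh(1/(2·sin γ)). -/
lemma arcosh_double (y : ℝ) (hy : 1 ≤ y) : arcosh (2 * y ^ 2 - 1) = 2 * arcosh y := by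
  have h1 : (0:ℝ) ≤ y ^ 2 - 1 := by nlinarith
  have h2 : Real.sqrt ((2 * y ^ 2 - 1) ^ 2 - 1) = 2 * y * Real.sqrt (y ^ 2 - 1) := by
    rw [show (2 * y ^ 2 - 1) ^ 2 - 1 = (2 * y) ^ 2 * (y ^ 2 - 1) by ring,
      Real.sqrt_mul (by positivity), Real.sqrt_sq (by positivity)]
  have h3 : Real.sqrt (y ^ 2 - 1) ^ 2 = y ^ 2 - 1 := Real.sq_sqrt h1
  unfold arcosh
  rw [h2, show 2 * y ^ 2 - 1 + 2 * y * Real.sqrt (y ^ 2 - 1)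
      = (y + Real.sqrt (y ^ 2 - 1)) ^ 2 by nlinarith, Real.log_pow]
  push_cast
  ring

theorem stmt_8 (w γ : ℝ) (hw : 0 < w) (hγ : γ ∈ Set.Ioo 0 (Real.pi / 2))
    (h : Real.sin γ = (-Real.cosh w + Real.sqrt (Real.cosh w ^ 2 + 8)) / 4) :
    arcosh (Real.cosh w * Real.sqrt (1 + Real.sinh w ^ 2 / (4 * Real.cos γ ^ 2))) =
      2 * arcosh (1 / (2 * Real.sin γ)) := by
  obtain ⟨hγ0, hγ1⟩ := hγ
  set s := Real.sin γ with hs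
  set c := Real.cosh w with hc
  have hspos : 0 < s := Real.sin_pos_of_pos_of_lt_pi hγ0 (by linarith [Real.pi_pos])
  have hcospos : 0 < Real.cos γ := Real.cos_pos_of_mem_Ioo ⟨by linarith [Real.pi_pos], hγ1⟩
  have hc1 : 1 < c := by
    have := Real.one_lt_cosh.mpr (ne_of_gt hw)
    simpa [hc] using this
  have hsq : Real.sqrt (c ^ 2 + 8) = 4 * s + c := by
    rw [h]; ring
  have hkey : s * c = 1 - 2 * s ^ 2 := by
    have h1 : c ^ 2 + 8 = (4 * s + c) ^ 2 := by
      rw [← hsq, Real.sq_sqrt (by positivity)]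
    nlinarith
  have hslt : s < 1 / 2 := by nlinarith
  have hcos2 : Real.cos γ ^ 2 = 1 - s ^ 2 := by
    have := Real.sin_sq_add_cos_sq γ; linarith
  have hsinh2 : Real.sinh w ^ 2 = c ^ 2 - 1 := by
    have := Real.cosh_sq w; simp only [← hc] at this; linarith
  have hs1 : s < 1 := by linarith
  have hinner : 1 + Real.sinh w ^ 2 / (4 * Real.cos γ ^ 2) = 1 / (4 * s ^ 2) := by
    rw [hsinh2, hcos2]
    have h1 : (1:ℝ) - s ^ 2 > 0 := by nlinarith
    field_simp
    nlinarith [sq_nonneg s, hkey]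
  have hsqrt : Real.sqrt (1 / (4 * s ^ 2)) = 1 / (2 * s) := by
    rw [show 1 / (4 * s ^ 2) = (1 / (2 * s)) ^ 2 by field_simp; ring]
    exact Real.sqrt_sq (by positivity)
  have hy : (1:ℝ) ≤ 1 / (2 * s) := by
    rw [le_div_iff₀ (by positivity)]; linarith
  have hX : c * Real.sqrt (1 + Real.sinh w ^ 2 / (4 * Real.cos γ ^ 2))
      = 2 * (1 / (2 * s)) ^ 2 - 1 := by
    rw [hinner, hsqrt]
    field_simp
    nlinarith [hkey]
  rw [hX, arcosh_double _ hy]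
end

section
/- For every w > 0, √(((cosh(w) + √(cosh²w + 8))/4)² − 1) < (√3/2)·sinh(w). -/
theorem stmt_9 (w : ℝ) (hw : 0 < w) :
    Real.sqrt (((Real.cosh w + Real.sqrt (Real.cosh w ^ 2 + 8)) / 4) ^ 2 - 1) <
      Real.sqrt 3 / 2 * Real.sinh w := by
  set c := Real.cosh w with hc
  set s := Real.sinh w with hs
  have hs0 : 0 < s := by positivity
  have hc0 : 0 < c := Real.cosh_pos w
  have hcs : c ^ 2 = s ^ 2 + 1 := Real.cosh_sq w
  have hc1 : 1 < c := by nlinarith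
  set t := Real.sqrt (c ^ 2 + 8) with htdef
  have ht0 : 0 ≤ t := Real.sqrt_nonneg _
  have ht : t ^ 2 = c ^ 2 + 8 := Real.sq_sqrt (by positivity)
  have h3 : Real.sqrt 3 ^ 2 = 3 := Real.sq_sqrt (by norm_num)
  have hct : c * t < 5 * c ^ 2 - 2 := by
    have hsq : (c * t) ^ 2 < (5 * c ^ 2 - 2) ^ 2 := by nlinarith
    exact lt_of_pow_lt_pow_left₀ 2 (by nlinarith) hsq
  have hrhs : 0 < Real.sqrt 3 / 2 * s := by positivity
  rw [show Real.sqrt (((c + t) / 4) ^ 2 - 1) < Real.sqrt 3 / 2 * s ↔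
      ((c + t) / 4) ^ 2 - 1 < (Real.sqrt 3 / 2 * s) ^ 2 from Real.sqrt_lt' hrhs]
  have : (Real.sqrt 3 / 2 * s) ^ 2 = 3 / 4 * s ^ 2 := by
    rw [mul_pow, div_pow, h3]; ring
  rw [this]
  nlinarith
end

section
/- For every w > 0, w/2 < arsinh((2/√3)·√(((cosh(w) + √(cosh²w + 8))/4)² − 1)) < w. -/
theorem stmt_10 (w : ℝ) (hw : 0 < w) :
    w / 2 < Real.arsinh (2 / Real.sqrt 3 *
        Real.sqrt (((Real.cosh w + Real.sqrt (Real.cosh w ^ 2 + 8)) / 4) ^ 2 - 1)) ∧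
    Real.arsinh (2 / Real.sqrt 3 *
        Real.sqrt (((Real.cosh w + Real.sqrt (Real.cosh w ^ 2 + 8)) / 4) ^ 2 - 1)) < w := by
  set c := Real.cosh w with hcdef
  have hc1 : 1 < c := Real.one_lt_cosh.mpr (ne_of_gt hw)
  set s := Real.sqrt (c ^ 2 + 8) with hsdef
  have hs0 : 0 ≤ s := Real.sqrt_nonneg _
  have hs2 : s ^ 2 = c ^ 2 + 8 := Real.sq_sqrt (by positivity)
  have hs3 : 3 < s := by nlinarith
  have h3 : (0:ℝ) < Real.sqrt 3 := Real.sqrt_pos.mpr (by norm_num)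
  -- rewrite the argument as a single sqrt
  have ht1 : (1:ℝ) < (c + s) / 4 := by nlinarith
  have harg : 2 / Real.sqrt 3 * Real.sqrt (((c + s) / 4) ^ 2 - 1)
      = Real.sqrt ((4 / 3) * (((c + s) / 4) ^ 2 - 1)) := by
    rw [Real.sqrt_mul (by norm_num)]
    congr 1
    rw [show (4:ℝ)/3 = (2 / Real.sqrt 3) ^ 2 by
      rw [div_pow, Real.sq_sqrt (by norm_num)]; norm_num]
    rw [Real.sqrt_sq (by positivity)]
  rw [harg]
  have hsinh2 : Real.sinh (w / 2) ^ 2 = (c - 1) / 2 := by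
    have h2 : Real.cosh w = Real.cosh (w / 2) ^ 2 + Real.sinh (w / 2) ^ 2 := by
      rw [← Real.cosh_two_mul]; ring_nf
    have h3 := Real.cosh_sq (w / 2)
    rw [hcdef]; nlinarith
  have hsinhw2 : Real.sinh w ^ 2 = c ^ 2 - 1 := Real.sinh_sq w
  have hsw2 : 0 ≤ Real.sinh (w / 2) := Real.sinh_nonneg_iff.mpr (by linarith)
  have hsw : 0 < Real.sinh w := Real.sinh_pos_iff.mpr hw
  constructor
  · rw [show w / 2 = Real.arsinh (Real.sinh (w / 2)) from (Real.arsinh_sinh _).symm,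
      Real.arsinh_lt_arsinh, Real.lt_sqrt hsw2, hsinh2]
    -- need (c-1)/2 < (4/3)(t²-1), i.e. c*s > -c²+3c+1
    have key : c * s + c ^ 2 - 3 * c - 1 > 0 := by
      nlinarith [mul_pos (by linarith : (0:ℝ) < c) (by linarith : (0:ℝ) < s),
        sq_nonneg (c * s + c ^ 2 - 3 * c - 1), sq_nonneg (c - 1), sq_nonneg s]
    nlinarith
  · rw [show w = Real.arsinh (Real.sinh w) from (Real.arsinh_sinh _).symm,
      Real.arsinh_lt_arsinh, Real.sqrt_lt' hsw, hsinhw2]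
    have key : c * s < 5 * c ^ 2 - 2 := by
      nlinarith [mul_pos (by linarith : (0:ℝ) < c) (by linarith : (0:ℝ) < s),
        sq_nonneg (c * s - 5 * c ^ 2 + 2), sq_nonneg (c - 1)]
    nlinarith
end

section
/- The limit as w → +∞ of arsinh((2/√3)·√(((cosh(w) + √(cosh²w + 8))/4)² − 1))/w equals 1. -/
open Real Filter

private lemma stmt_11_aux : ∀ᶠ w : ℝ in atTop,
    w - Real.log 4 ≤ Real.arsinh (2 / Real.sqrt 3 *
        Real.sqrt (((Real.cosh w + Real.sqrt (Real.cosh w ^ 2 + 8)) / 4) ^ 2 - 1)) ∧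
    Real.arsinh (2 / Real.sqrt 3 *
        Real.sqrt (((Real.cosh w + Real.sqrt (Real.cosh w ^ 2 + 8)) / 4) ^ 2 - 1))
      ≤ w + Real.log 6 := by
  filter_upwards [eventually_ge_atTop (5:ℝ)] with w hw
  have hw0 : (0:ℝ) < w := by linarith
  have hexp : (6:ℝ) ≤ Real.exp w := by
    have := Real.add_one_le_exp w; linarith
  have hexp0 : (0:ℝ) < Real.exp w := Real.exp_pos w
  have hexpneg : Real.exp (-w) ≤ 1 := Real.exp_le_one_iff.2 (by linarith)
  have hexpneg0 : 0 < Real.exp (-w) := Real.exp_pos _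
  set c := Real.cosh w with hcdef
  have hc : c = (Real.exp w + Real.exp (-w)) / 2 := Real.cosh_eq w
  have hc1 : Real.exp w / 2 ≤ c := by rw [hc]; linarith
  have hc2 : c ≤ Real.exp w := by rw [hc]; linarith
  have hc0 : (3:ℝ) ≤ c := by linarith
  set s := Real.sqrt (c ^ 2 + 8) with hsdef
  have hs1 : c ≤ s := by
    rw [hsdef]
    nlinarith [Real.sq_sqrt (by positivity : (0:ℝ) ≤ c ^ 2 + 8),
      Real.sqrt_nonneg (c ^ 2 + 8)]
  have hs2 : s ≤ c + 3 := by
    rw [hsdef]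
    have h := Real.sqrt_le_sqrt (show c ^ 2 + 8 ≤ (c + 3) ^ 2 by nlinarith)
    rwa [Real.sqrt_sq (by linarith)] at h
  set t := (c + s) / 4 with htdef
  have ht1 : Real.exp w / 4 ≤ t := by rw [htdef]; linarith
  have ht2 : t ≤ Real.exp w := by rw [htdef]; linarith
  have ht0 : (3:ℝ) / 2 ≤ t := by linarith
  have ht1' : (0:ℝ) ≤ t ^ 2 - 1 := by nlinarith
  set g := 2 / Real.sqrt 3 * Real.sqrt (t ^ 2 - 1) with hgdef
  have hg0 : 0 ≤ g := by positivity
  have hgsq : g ^ 2 = 4 / 3 * (t ^ 2 - 1) := by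
    rw [hgdef, mul_pow, div_pow, Real.sq_sqrt ht1', Real.sq_sqrt (by norm_num : (0:ℝ) ≤ 3)]
    ring
  have hglo : Real.exp w / 8 ≤ g := by
    nlinarith [hgsq]
  have hghi : g ≤ 2 * Real.exp w := by
    nlinarith [hgsq]
  constructor
  · have hle : Real.sinh (w - Real.log 4) ≤ g := by
      rw [Real.sinh_eq, Real.exp_sub, Real.exp_log (by norm_num : (0:ℝ) < 4),
        neg_sub, Real.exp_sub, Real.exp_log (by norm_num : (0:ℝ) < 4)]
      have h2 : 0 < 4 / Real.exp w := by positivity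
      linarith
    calc w - Real.log 4 = Real.arsinh (Real.sinh (w - Real.log 4)) := (Real.arsinh_sinh _).symm
      _ ≤ Real.arsinh g := Real.arsinh_le_arsinh.2 hle
  · have hle : g ≤ Real.sinh (w + Real.log 6) := by
      rw [Real.sinh_eq, Real.exp_add, Real.exp_log (by norm_num : (0:ℝ) < 6),
        neg_add, Real.exp_add, Real.exp_neg (Real.log 6),
        Real.exp_log (by norm_num : (0:ℝ) < 6)]
      nlinarith
    calc Real.arsinh g ≤ Real.arsinh (Real.sinh (w + Real.log 6)) :=
          Real.arsinh_le_arsinh.2 hle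
      _ = w + Real.log 6 := Real.arsinh_sinh _

theorem stmt_11 :
    Filter.Tendsto
      (fun w : ℝ => Real.arsinh (2 / Real.sqrt 3 *
          Real.sqrt (((Real.cosh w + Real.sqrt (Real.cosh w ^ 2 + 8)) / 4) ^ 2 - 1)) / w)
      Filter.atTop (nhds 1) := by
  have hlo : Tendsto (fun w : ℝ => (w - Real.log 4) / w) atTop (nhds 1) := by
    have h : Tendsto (fun w : ℝ => 1 - Real.log 4 / w) atTop (nhds 1) := by
      have := (tendsto_const_nhds (x := Real.log 4)).div_atTop (tendsto_id (α := ℝ))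
      simpa using tendsto_const_nhds.sub this
    refine h.congr' ?_
    filter_upwards [eventually_gt_atTop (0:ℝ)] with w hw
    field_simp
  have hhi : Tendsto (fun w : ℝ => (w + Real.log 6) / w) atTop (nhds 1) := by
    have h : Tendsto (fun w : ℝ => 1 + Real.log 6 / w) atTop (nhds 1) := by
      have := (tendsto_const_nhds (x := Real.log 6)).div_atTop (tendsto_id (α := ℝ))
      simpa using tendsto_const_nhds.add this
    refine h.congr' ?_
    filter_upwards [eventually_gt_atTop (0:ℝ)] with w hw
    field_simp
  refine tendsto_of_tendsto_of_tendsto_of_le_of_le' hlo hhi ?_ ?_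
  · filter_upwards [stmt_11_aux, eventually_gt_atTop (0:ℝ)] with w h hw
    exact (div_le_div_iff_of_pos_right hw).2 h.1
  · filter_upwards [stmt_11_aux, eventually_gt_atTop (0:ℝ)] with w h hw
    exact (div_le_div_iff_of_pos_right hw).2 h.2
end

section
/- In n-dimensional hyperbolic space H^n, let X be a compact set, let z ∈ conv(X), and let r > 0. Then the intersection of the closed balls B(x, r) over all x ∈ X is contained in the closed ball B(z, r). -/
/-- The Poincaré ball model of `n`-dimensional hyperbolic space. -/
noncomputable def HypSpace (n : ℕ) : Type := {x : EuclideanSpace ℝ (Fin n) // ‖x‖ < 1}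

noncomputable instance (n : ℕ) : TopologicalSpace (HypSpace n) :=
  instTopologicalSpaceSubtype

/-- The hyperbolic distance in the Poincaré ball model. -/
noncomputable def hDist {n : ℕ} (x y : HypSpace n) : ℝ :=
  Real.log (1 + 2 * ‖x.1 - y.1‖ ^ 2 /
      ((1 - ‖x.1‖ ^ 2) * (1 - ‖y.1‖ ^ 2)) +
    Real.sqrt ((1 + 2 * ‖x.1 - y.1‖ ^ 2 /
      ((1 - ‖x.1‖ ^ 2) *
        (1 - ‖y.1‖ ^ 2))) ^ 2 - 1))

/-- The geodesic segment between `x` and `y`: points lying metrically between them. -/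
def hSeg {n : ℕ} (x y : HypSpace n) : Set (HypSpace n) :=
  {z | hDist x z + hDist z y = hDist x y}

/-- Geodesic convexity in hyperbolic space. -/
def HConvex {n : ℕ} (S : Set (HypSpace n)) : Prop :=
  ∀ x ∈ S, ∀ y ∈ S, hSeg x y ⊆ S

/-- The hyperbolic convex hull: intersection of all convex sets containing `X`. -/
def hConvexHull {n : ℕ} (X : Set (HypSpace n)) : Set (HypSpace n) :=
  ⋂₀ {S | HConvex S ∧ X ⊆ S}

/-- The closed hyperbolic ball of radius `r` centered at `x`. -/
def hBall {n : ℕ} (x : HypSpace n) (r : ℝ) : Set (HypSpace n) :=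
  {y | hDist x y ≤ r}

open RealInnerProductSpace

namespace HypAux

variable {n : ℕ}

lemma denom_pos (x : HypSpace n) : 0 < 1 - ‖x.1‖ ^ 2 := by
  nlinarith [x.2, norm_nonneg x.1]

/-- Time coordinate of the hyperboloid embedding. -/
noncomputable def Tc (x : HypSpace n) : ℝ := (1 + ‖x.1‖ ^ 2) / (1 - ‖x.1‖ ^ 2)

/-- Space coordinate of the hyperboloid embedding. -/
noncomputable def Sc (x : HypSpace n) : EuclideanSpace ℝ (Fin n) :=
  (2 / (1 - ‖x.1‖ ^ 2)) • x.1

/-- Minkowski pairing of embedded points. -/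
noncomputable def Mp (x y : HypSpace n) : ℝ := Tc x * Tc y - ⟪Sc x, Sc y⟫

lemma Mp_eq (x y : HypSpace n) :
    Mp x y = 1 + 2 * ‖x.1 - y.1‖ ^ 2 / ((1 - ‖x.1‖ ^ 2) * (1 - ‖y.1‖ ^ 2)) := by
  have hx := denom_pos x
  have hy := denom_pos y
  have h1 : ‖x.1 - y.1‖ ^ 2 = ‖x.1‖ ^ 2 - 2 * ⟪x.1, y.1⟫ + ‖y.1‖ ^ 2 :=
    norm_sub_sq_real x.1 y.1
  unfold Mp Tc Sc
  rw [real_inner_smul_left, real_inner_smul_right, h1]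
  field_simp
  ring

lemma one_le_Mp (x y : HypSpace n) : 1 ≤ Mp x y := by
  rw [Mp_eq]
  have hx := denom_pos x
  have hy := denom_pos y
  have : 0 ≤ 2 * ‖x.1 - y.1‖ ^ 2 / ((1 - ‖x.1‖ ^ 2) * (1 - ‖y.1‖ ^ 2)) := by
    positivity
  linarith

lemma Mp_symm (x y : HypSpace n) : Mp x y = Mp y x := by
  rw [Mp_eq, Mp_eq, norm_sub_rev]; ring

lemma Mp_self (x : HypSpace n) : Mp x x = 1 := by
  rw [Mp_eq]; simp

/-- The abstract `arcosh` expression. -/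
noncomputable def g (c : ℝ) : ℝ := Real.log (c + Real.sqrt (c ^ 2 - 1))

lemma hDist_eq (x y : HypSpace n) : hDist x y = g (Mp x y) := by
  rw [g, Mp_eq, hDist]

lemma sqrt_sq_sub_one {c : ℝ} (hc : 1 ≤ c) : (Real.sqrt (c ^ 2 - 1)) ^ 2 = c ^ 2 - 1 :=
  Real.sq_sqrt (by nlinarith)

lemma one_le_add_sqrt {c : ℝ} (hc : 1 ≤ c) : 1 ≤ c + Real.sqrt (c ^ 2 - 1) := by
  have := Real.sqrt_nonneg (c ^ 2 - 1); linarith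

lemma exp_g {c : ℝ} (hc : 1 ≤ c) : Real.exp (g c) = c + Real.sqrt (c ^ 2 - 1) :=
  Real.exp_log (by linarith [one_le_add_sqrt hc])

lemma exp_neg_g {c : ℝ} (hc : 1 ≤ c) : Real.exp (-(g c)) = c - Real.sqrt (c ^ 2 - 1) := by
  have h1 : (0:ℝ) < c + Real.sqrt (c ^ 2 - 1) := by linarith [one_le_add_sqrt hc]
  have h2 : (c + Real.sqrt (c ^ 2 - 1)) * (c - Real.sqrt (c ^ 2 - 1)) = 1 := by
    have := sqrt_sq_sub_one hc; nlinarith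
  rw [Real.exp_neg, exp_g hc]
  exact (eq_inv_of_mul_eq_one_left (by linear_combination h2)).symm

lemma cosh_g {c : ℝ} (hc : 1 ≤ c) : Real.cosh (g c) = c := by
  rw [Real.cosh_eq, exp_g hc, exp_neg_g hc]; ring

lemma sinh_g {c : ℝ} (hc : 1 ≤ c) : Real.sinh (g c) = Real.sqrt (c ^ 2 - 1) := by
  rw [Real.sinh_eq, exp_g hc, exp_neg_g hc]; ring

lemma g_nonneg {c : ℝ} (hc : 1 ≤ c) : 0 ≤ g c :=
  Real.log_nonneg (one_le_add_sqrt hc)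

lemma g_le_iff {c r : ℝ} (hc : 1 ≤ c) (hr : 0 ≤ r) : g c ≤ r ↔ c ≤ Real.cosh r := by
  constructor
  · intro h
    have h2 : |g c| ≤ |r| := by rwa [abs_of_nonneg (g_nonneg hc), abs_of_nonneg hr]
    have := Real.cosh_le_cosh.2 h2
    rwa [cosh_g hc] at this
  · intro h
    have h' : Real.cosh (g c) ≤ Real.cosh r := by rwa [cosh_g hc]
    have := Real.cosh_le_cosh.1 h'
    rwa [abs_of_nonneg (g_nonneg hc), abs_of_nonneg hr] at this

/-- A Minkowski-null vector orthogonal to a timelike vector is zero. -/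
lemma null_orth {t t' : ℝ} {v v' : EuclideanSpace ℝ (Fin n)}
    (hnull : t * t - ⟪v, v⟫ = 0) (htime : 0 < t' * t' - ⟪v', v'⟫)
    (horth : t * t' - ⟪v, v'⟫ = 0) : t = 0 ∧ v = 0 := by
  have hvv : ⟪v, v⟫ = ‖v‖ ^ 2 := real_inner_self_eq_norm_sq v
  have hvv' : ⟪v', v'⟫ = ‖v'‖ ^ 2 := real_inner_self_eq_norm_sq v'
  have habs := abs_real_inner_le_norm v v'
  have hcs : ⟪v, v'⟫ ^ 2 ≤ ‖v‖ ^ 2 * ‖v'‖ ^ 2 := by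
    nlinarith [abs_nonneg ⟪v, v'⟫, le_abs_self ⟪v, v'⟫, neg_abs_le ⟪v, v'⟫,
      norm_nonneg v, norm_nonneg v']
  have ht : t = 0 := by
    by_contra ht
    have htpos : 0 < t ^ 2 := by positivity
    have h1 : t ^ 2 * t' ^ 2 = ⟪v, v'⟫ ^ 2 := by linear_combination (t * t' + ⟪v, v'⟫) * horth
    have h3 : 0 < t' ^ 2 - ‖v'‖ ^ 2 := by nlinarith [htime]
    nlinarith [mul_pos htpos h3, h1, hcs]
  refine ⟨ht, ?_⟩
  have h2 : ‖v‖ ^ 2 = 0 := by nlinarith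
  have h3 : ‖v‖ = 0 := by nlinarith [norm_nonneg v]
  exact norm_eq_zero.mp h3

lemma hDist_symm (x y : HypSpace n) : hDist x y = hDist y x := by
  rw [hDist_eq, hDist_eq, Mp_symm]

lemma eq_of_Mp_eq_one {x p : HypSpace n} (h : Mp x p = 1) : x = p := by
  rw [Mp_eq] at h
  have hdx := denom_pos x
  have hdp := denom_pos p
  have h3 : 2 * ‖x.1 - p.1‖ ^ 2 / ((1 - ‖x.1‖ ^ 2) * (1 - ‖p.1‖ ^ 2)) = 0 := by
    linarith
  have h2 : ‖x.1 - p.1‖ ^ 2 = 0 := by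
    rcases div_eq_zero_iff.mp h3 with h4 | h4
    · nlinarith [norm_nonneg (x.1 - p.1)]
    · nlinarith [mul_pos hdx hdp]
  have h5 : ‖x.1 - p.1‖ = 0 := by nlinarith [norm_nonneg (x.1 - p.1)]
  exact Subtype.ext (sub_eq_zero.mp (norm_eq_zero.mp h5))

set_option maxHeartbeats 1000000 in
/-- Closed hyperbolic balls are geodesically convex. -/
lemma hBall_convex (w : HypSpace n) {r : ℝ} (hr : 0 ≤ r) : HConvex (hBall w r) := by
  intro x hx y hy p hp
  simp only [hBall, Set.mem_setOf_eq] at hx hy ⊢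
  have hp' : hDist x p + hDist p y = hDist x y := hp
  set a := Mp x p with ha_def
  set b := Mp p y with hb_def
  set c := Mp x y with hc_def
  have ha : 1 ≤ a := one_le_Mp x p
  have hb : 1 ≤ b := one_le_Mp p y
  have hc : 1 ≤ c := one_le_Mp x y
  set sa := Real.sqrt (a ^ 2 - 1) with hsa_def
  set sb := Real.sqrt (b ^ 2 - 1) with hsb_def
  have hsa2 : sa ^ 2 = a ^ 2 - 1 := sqrt_sq_sub_one ha
  have hsb2 : sb ^ 2 = b ^ 2 - 1 := sqrt_sq_sub_one hb
  have hsa0 : 0 ≤ sa := Real.sqrt_nonneg _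
  have hsb0 : 0 ≤ sb := Real.sqrt_nonneg _
  -- the segment condition in algebraic form
  have hseg : c = a * b + sa * sb := by
    rw [hDist_eq, hDist_eq, hDist_eq, ← ha_def, ← hb_def, ← hc_def] at hp'
    have hcc := cosh_g hc
    rw [← hp', Real.cosh_add, cosh_g ha, cosh_g hb, sinh_g ha, sinh_g hb,
      ← hsa_def, ← hsb_def] at hcc
    linarith
  set γ := a * sb + b * sa with hγ_def
  -- the three orthogonality relations
  have rel1 : sb * 1 + sa * c - γ * a = 0 := by
    rw [hseg, hγ_def]; nlinarith [hsa2]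
  have rel2 : sb * c + sa * 1 - γ * b = 0 := by
    rw [hseg, hγ_def]; nlinarith [hsb2]
  have rel3 : sb * a + sa * b - γ * 1 = 0 := by rw [hγ_def]; ring
  -- the vector V = sb • X + sa • Y - γ • P  (in hyperboloid coordinates)
  set vt : ℝ := sb * Tc x + sa * Tc y - γ * Tc p with hvt_def
  set vv : EuclideanSpace ℝ (Fin n) := sb • Sc x + sa • Sc y - γ • Sc p with hvv_def
  have pair : ∀ u : HypSpace n,
      vt * Tc u - ⟪vv, Sc u⟫ = sb * Mp x u + sa * Mp y u - γ * Mp p u := by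
    intro u
    rw [hvv_def, hvt_def, inner_sub_left, inner_add_left, real_inner_smul_left,
      real_inner_smul_left, real_inner_smul_left]
    unfold Mp
    ring
  have pairx : vt * Tc x - ⟪vv, Sc x⟫ = 0 := by
    rw [pair x, Mp_self, Mp_symm y x, Mp_symm p x, ← hc_def, ← ha_def]
    linarith [rel1]
  have pairy : vt * Tc y - ⟪vv, Sc y⟫ = 0 := by
    rw [pair y, Mp_self, ← hc_def, ← hb_def]
    linarith [rel2]
  have pairp : vt * Tc p - ⟪vv, Sc p⟫ = 0 := by
    rw [pair p, Mp_self, Mp_symm y p, ← ha_def, ← hb_def]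
    linarith [rel3]
  have hnull : vt * vt - ⟪vv, vv⟫ = 0 := by
    have hexp : vt * vt - ⟪vv, vv⟫ =
        sb * (vt * Tc x - ⟪vv, Sc x⟫) + sa * (vt * Tc y - ⟪vv, Sc y⟫)
          - γ * (vt * Tc p - ⟪vv, Sc p⟫) := by
      nth_rewrite 2 [hvt_def]
      nth_rewrite 2 [hvv_def]
      rw [inner_sub_right, inner_add_right, real_inner_smul_right, real_inner_smul_right,
        real_inner_smul_right]
      ring
    rw [hexp, pairx, pairy, pairp]; ring
  have htime : 0 < Tc x * Tc x - ⟪Sc x, Sc x⟫ := by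
    have h : Tc x * Tc x - ⟪Sc x, Sc x⟫ = Mp x x := rfl
    rw [h, Mp_self]; norm_num
  obtain ⟨hvt0, hvv0⟩ := null_orth hnull htime pairx
  -- hence γ • P = sb • X + sa • Y
  have hT : γ * Tc p = sb * Tc x + sa * Tc y := by
    rw [hvt_def] at hvt0; linarith
  have hS : γ • Sc p = sb • Sc x + sa • Sc y := by
    rw [hvv_def] at hvv0
    exact (sub_eq_zero.mp hvv0).symm
  -- bounds from the hypotheses
  have hcosh1 : 1 ≤ Real.cosh r := Real.one_le_cosh r
  have hbx : Mp x w ≤ Real.cosh r := by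
    have := (g_le_iff (one_le_Mp w x) hr).1 (by rwa [hDist_eq] at hx)
    rwa [Mp_symm] at this
  have hby : Mp y w ≤ Real.cosh r := by
    have := (g_le_iff (one_le_Mp w y) hr).1 (by rwa [hDist_eq] at hy)
    rwa [Mp_symm] at this
  have key : γ * Mp p w = sb * Mp x w + sa * Mp y w := by
    have h2 : γ * ⟪Sc p, Sc w⟫ = sb * ⟪Sc x, Sc w⟫ + sa * ⟪Sc y, Sc w⟫ := by
      rw [← real_inner_smul_left, hS, inner_add_left, real_inner_smul_left,
        real_inner_smul_left]
    unfold Mp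
    have h1 : γ * (Tc p * Tc w) = (sb * Tc x + sa * Tc y) * Tc w := by rw [← hT]; ring
    linear_combination h1 - h2
  have hγ0 : 0 ≤ γ := by rw [hγ_def]; positivity
  have hsum : sb + sa ≤ γ := by rw [hγ_def]; nlinarith
  have hMpxp : Mp x p = a := ha_def.symm
  -- discard the vector-level hypotheses; only real arithmetic remains
  clear_value vt vv
  clear! vt vv
  clear hp hp' htime hT hS hseg rel1 rel2 rel3 hx hy
  rw [hDist_eq]
  rw [g_le_iff (one_le_Mp w p) hr, Mp_symm]
  rcases eq_or_lt_of_le hγ0 with hγ | hγ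
  · -- degenerate case: the segment has zero length, p = x
    have hsa' : sa = 0 := by nlinarith
    have ha1 : Mp x p = 1 := by rw [hMpxp]; nlinarith
    rw [← eq_of_Mp_eq_one ha1]
    exact hbx
  · -- main case: divide by γ
    have e1 : sb * Mp x w ≤ sb * Real.cosh r := mul_le_mul_of_nonneg_left hbx hsb0
    have e2 : sa * Mp y w ≤ sa * Real.cosh r := mul_le_mul_of_nonneg_left hby hsa0
    have e3 : (sb + sa) * Real.cosh r ≤ γ * Real.cosh r :=
      mul_le_mul_of_nonneg_right hsum (by positivity)
    have hMp : γ * Mp p w ≤ γ * Real.cosh r := by rw [key]; nlinarith [e1, e2, e3]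
    exact le_of_mul_le_mul_left hMp hγ
end HypAux

theorem stmt_17 {n : ℕ} (X : Set (HypSpace n)) (hX : IsCompact X)
    (z : HypSpace n) (hz : z ∈ hConvexHull X) (r : ℝ) (hr : 0 < r) :
    (⋂ x ∈ X, hBall x r) ⊆ hBall z r := by
  intro w hw
  simp only [Set.mem_iInter] at hw
  have hsub : X ⊆ hBall w r := by
    intro x hxX
    have : w ∈ hBall x r := hw x hxX
    simp only [hBall, Set.mem_setOf_eq] at this ⊢
    rw [HypAux.hDist_symm]
    exact this
  have hz' : z ∈ hBall w r :=
    hz (hBall w r) ⟨HypAux.hBall_convex w hr.le, hsub⟩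
  simp only [hBall, Set.mem_setOf_eq] at hz' ⊢
  rw [HypAux.hDist_symm]
  exact hz'
end
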